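/- Let x, x⋆, x′ ∈ ℝⁿ be nonzero vectors, set λ⋆ = λ(x⋆) and assume λ⋆ ≤ λ(x). Let t ∈ (0,1) and Δ ∈ (0,1) be such that √(1−Δ²) − ρ(x⋆)·Δ ≥ √( λ⋆ / (λ⋆ + t·(λ(x) − λ⋆)) ), and assume sin ∠_A(x′, x⋆) ≤ Δ. Then λ(x′) ≤ λ⋆ + t·(λ(x) − λ⋆). -/

import Mathlib

open Matrix Real

/-- Euclidean inner product weighted by the matrix `A`: `⟨x,y⟩_A = ⟨Ax,y⟩`. -/
noncomputable def ipA {n : ℕ} (A : Matrix (Fin n) (Fin n) ℝ) (x y : Fin n → ℝ) : ℝ :=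
  A.mulVec x ⬝ᵥ y

/-- The `A`-norm `‖x‖_A = √⟨Ax,x⟩`. -/
noncomputable def normA {n : ℕ} (A : Matrix (Fin n) (Fin n) ℝ) (x : Fin n → ℝ) : ℝ :=
  Real.sqrt (ipA A x x)

/-- The `A`-angle `∠_A(u,x) ∈ [0,π]`. -/
noncomputable def angleA {n : ℕ} (A : Matrix (Fin n) (Fin n) ℝ) (u x : Fin n → ℝ) : ℝ :=
  Real.arccos (ipA A u x / (normA A u * normA A x))

/-- The generalized Rayleigh quotient `λ(x) = ⟨Ax,x⟩/⟨Ex,x⟩`. -/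
noncomputable def rayleigh {n : ℕ} (A E : Matrix (Fin n) (Fin n) ℝ) (x : Fin n → ℝ) : ℝ :=
  (A.mulVec x ⬝ᵥ x) / (E.mulVec x ⬝ᵥ x)

/-- The residual `r(x) = Ax − λ(x)·Ex`. -/
noncomputable def residualA {n : ℕ} (A E : Matrix (Fin n) (Fin n) ℝ) (x : Fin n → ℝ) :
    Fin n → ℝ :=
  A.mulVec x - rayleigh A E x • E.mulVec x

/-- The normalized residual `ρ(x) = ‖r(x)‖_{A⁻¹} / ‖x‖_A`. -/
noncomputable def rhoRes {n : ℕ} (A E : Matrix (Fin n) (Fin n) ℝ) (x : Fin n → ℝ) : ℝ :=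
  Real.sqrt (A⁻¹.mulVec (residualA A E x) ⬝ᵥ residualA A E x) / normA A x

variable {n : ℕ}

lemma symm_dot (M : Matrix (Fin n) (Fin n) ℝ) (hM : M.IsHermitian) (u v : Fin n → ℝ) :
    M.mulVec u ⬝ᵥ v = M.mulVec v ⬝ᵥ u := by
  have h : Mᵀ = M := by
    have := hM.eq
    rwa [Matrix.conjTranspose_eq_transpose_of_trivial] at this
  rw [dotProduct_comm, Matrix.dotProduct_mulVec, ← Matrix.mulVec_transpose, h]

lemma cs_psd (M : Matrix (Fin n) (Fin n) ℝ) (hM : M.PosSemidef) (u v : Fin n → ℝ) :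
    (M.mulVec u ⬝ᵥ v) ^ 2 ≤ (M.mulVec u ⬝ᵥ u) * (M.mulVec v ⬝ᵥ v) := by
  have hsym := symm_dot M hM.1
  have key : ∀ s : ℝ, 0 ≤ (M.mulVec v ⬝ᵥ v) * (s * s) + (2 * (M.mulVec u ⬝ᵥ v)) * s
      + (M.mulVec u ⬝ᵥ u) := by
    intro s
    have h0 := hM.dotProduct_mulVec_nonneg (u + s • v)
    simp only [star_trivial] at h0
    have expand : (u + s • v) ⬝ᵥ M.mulVec (u + s • v)
        = (M.mulVec v ⬝ᵥ v) * (s * s) + (2 * (M.mulVec u ⬝ᵥ v)) * s + (M.mulVec u ⬝ᵥ u) := by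
      rw [Matrix.mulVec_add, Matrix.mulVec_smul]
      simp only [dotProduct_add, add_dotProduct, smul_dotProduct, dotProduct_smul, smul_eq_mul]
      have h1 : u ⬝ᵥ M.mulVec u = M.mulVec u ⬝ᵥ u := dotProduct_comm _ _
      have h2 : v ⬝ᵥ M.mulVec u = M.mulVec u ⬝ᵥ v := dotProduct_comm _ _
      have h3 : u ⬝ᵥ M.mulVec v = M.mulVec u ⬝ᵥ v := by rw [dotProduct_comm, hsym]
      have h4 : v ⬝ᵥ M.mulVec v = M.mulVec v ⬝ᵥ v := dotProduct_comm _ _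
      rw [h1, h2, h3, h4]; ring
    rw [expand] at h0; exact h0
  have hd := discrim_le_zero key
  rw [discrim] at hd
  nlinarith [hd]

lemma dot_pos (M : Matrix (Fin n) (Fin n) ℝ) (hM : M.PosDef) {v : Fin n → ℝ} (hv : v ≠ 0) :
    0 < M.mulVec v ⬝ᵥ v := by
  have h := hM.dotProduct_mulVec_pos hv
  simp only [star_trivial] at h
  rwa [dotProduct_comm] at h


lemma arith_main (a' e' as es m rx q rr rho lams mu Δ c s : ℝ)
    (ha' : 0 < a') (he' : 0 < e') (has : 0 < as) (hes : 0 < es)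
    (hlams : lams = as / es)
    (hmu0 : 0 < mu)
    (hrr : 0 ≤ rr) (hrho : rho = Real.sqrt rr / Real.sqrt as)
    (hm : 0 ≤ m) (hcsA : m ^ 2 ≤ a' * as)
    (hΔ0 : 0 < Δ) (hΔ1 : Δ < 1)
    (hc : c = m / (Real.sqrt a' * Real.sqrt as))
    (hs : s = Real.sqrt (1 - c ^ 2))
    (hsΔ : s ≤ Δ)
    (hcond : Real.sqrt (1 - Δ ^ 2) - rho * Δ ≥ Real.sqrt (lams / mu))
    (hrx2 : rx ^ 2 ≤ rr * (a' - m ^ 2 / as))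
    (hq : lams * q = m - rx)
    (hcsE : q ^ 2 ≤ e' * es) :
    a' / e' ≤ mu := by
  have hlams_pos : 0 < lams := by rw [hlams]; positivity
  have hc_nonneg : 0 ≤ c := by
    rw [hc]; exact div_nonneg hm (by positivity)
  have hcm : m = c * (Real.sqrt a' * Real.sqrt as) := by
    rw [hc]; field_simp
  have hc2 : c ^ 2 ≤ 1 := by
    rw [hc, div_pow, mul_pow, Real.sq_sqrt ha'.le, Real.sq_sqrt has.le,
      div_le_one (by positivity)]
    exact hcsA
  have hs_nonneg : 0 ≤ s := hs ▸ Real.sqrt_nonneg _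
  have hs2 : s ^ 2 = 1 - c ^ 2 := by rw [hs]; exact Real.sq_sqrt (by linarith)
  have hc_ge : Real.sqrt (1 - Δ ^ 2) ≤ c := by
    have h0 : s ^ 2 ≤ Δ ^ 2 := pow_le_pow_left₀ hs_nonneg hsΔ 2
    have h1 : 1 - Δ ^ 2 ≤ c ^ 2 := by linarith
    calc Real.sqrt (1 - Δ ^ 2) ≤ Real.sqrt (c ^ 2) := Real.sqrt_le_sqrt h1
    _ = c := Real.sqrt_sq hc_nonneg
  have hrho_nonneg : 0 ≤ rho := by rw [hrho]; positivity
  have hs2a : a' - m ^ 2 / as = a' * s ^ 2 := by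
    rw [hs2, hc, div_pow, mul_pow, Real.sq_sqrt ha'.le, Real.sq_sqrt has.le]
    field_simp
  have hR : Real.sqrt rr = rho * Real.sqrt as := by
    rw [hrho]; field_simp
  have hrx_le : rx ≤ rho * Real.sqrt as * Real.sqrt a' * s := by
    have hK : 0 ≤ Real.sqrt rr * Real.sqrt a' * s := by positivity
    have hsq : rx ^ 2 ≤ (Real.sqrt rr * Real.sqrt a' * s) ^ 2 := by
      rw [mul_pow, mul_pow, Real.sq_sqrt hrr, Real.sq_sqrt ha'.le]
      calc rx ^ 2 ≤ rr * (a' - m ^ 2 / as) := hrx2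
      _ = rr * a' * s ^ 2 := by rw [hs2a]; ring
    have h1 : rx ≤ Real.sqrt rr * Real.sqrt a' * s := by
      calc rx ≤ |rx| := le_abs_self _
      _ = Real.sqrt (rx ^ 2) := (Real.sqrt_sq_eq_abs _).symm
      _ ≤ Real.sqrt ((Real.sqrt rr * Real.sqrt a' * s) ^ 2) := Real.sqrt_le_sqrt hsq
      _ = Real.sqrt rr * Real.sqrt a' * s := Real.sqrt_sq hK
    calc rx ≤ Real.sqrt rr * Real.sqrt a' * s := h1
    _ = rho * Real.sqrt as * Real.sqrt a' * s := by rw [hR]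
  have hklow : Real.sqrt (lams / mu) ≤ c - rho * s := by
    have h1 : rho * s ≤ rho * Δ := mul_le_mul_of_nonneg_left hsΔ hrho_nonneg
    linarith [hcond, hc_ge]
  have hlq : Real.sqrt a' * Real.sqrt as * (c - rho * s) ≤ lams * q := by
    rw [hq, hcm]
    have h2 : c * (Real.sqrt a' * Real.sqrt as) - (rho * Real.sqrt as * Real.sqrt a' * s)
        = Real.sqrt a' * Real.sqrt as * (c - rho * s) := by ring
    linarith [hrx_le]
  have hlq_ge : Real.sqrt a' * Real.sqrt as * Real.sqrt (lams / mu) ≤ lams * q :=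
    le_trans (mul_le_mul_of_nonneg_left hklow (by positivity)) hlq
  have hsq_main : a' * as * (lams / mu) ≤ (lams * q) ^ 2 := by
    have h := mul_self_le_mul_self (by positivity :
      (0:ℝ) ≤ Real.sqrt a' * Real.sqrt as * Real.sqrt (lams / mu)) hlq_ge
    calc a' * as * (lams / mu)
        = (Real.sqrt a' * Real.sqrt as * Real.sqrt (lams / mu))
          * (Real.sqrt a' * Real.sqrt as * Real.sqrt (lams / mu)) := by
          rw [show ∀ u v w : ℝ, (u*v*w)*(u*v*w) = (u*u)*(v*v)*(w*w) from by intros; ring]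
          rw [Real.mul_self_sqrt ha'.le, Real.mul_self_sqrt has.le,
            Real.mul_self_sqrt (by positivity)]
    _ ≤ (lams * q) * (lams * q) := h
    _ = (lams * q) ^ 2 := by ring
  have has_eq : as = lams * es := by rw [hlams]; field_simp
  have hchain : lams ^ 2 * es * (a' / mu) ≤ lams ^ 2 * es * e' := by
    have h1 : a' * as * (lams / mu) = lams ^ 2 * es * (a' / mu) := by
      rw [has_eq]; field_simp
    have h2 : (lams * q) ^ 2 = lams ^ 2 * q ^ 2 := by ring
    have h3 : lams ^ 2 * q ^ 2 ≤ lams ^ 2 * (e' * es) :=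
      mul_le_mul_of_nonneg_left hcsE (sq_nonneg lams)
    have h4 : lams ^ 2 * (e' * es) = lams ^ 2 * es * e' := by ring
    linarith [hsq_main, h1 ▸ hsq_main]
  have he'ge : a' / mu ≤ e' :=
    le_of_mul_le_mul_left hchain (by positivity)
  rw [div_le_iff₀ he']
  have := (div_le_iff₀ hmu0).mp he'ge
  linarith

theorem key_lemma
    (A E : Matrix (Fin n) (Fin n) ℝ) (hA : A.PosDef) (hE : E.PosDef)
    (x xs x' : Fin n → ℝ) (hxs : xs ≠ 0) (hx' : x' ≠ 0)
    (hls : rayleigh A E xs ≤ rayleigh A E x)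
    (t : ℝ) (ht : t ∈ Set.Ioo (0:ℝ) 1)
    (Δ : ℝ) (hΔ : Δ ∈ Set.Ioo (0:ℝ) 1)
    (hcond : Real.sqrt (1 - Δ ^ 2) - rhoRes A E xs * Δ ≥
      Real.sqrt (rayleigh A E xs /
        (rayleigh A E xs + t * (rayleigh A E x - rayleigh A E xs))))
    (hangle : Real.sin (angleA A x' xs) ≤ Δ)
    (hm : 0 ≤ A.mulVec x' ⬝ᵥ xs) :
    rayleigh A E x' ≤ rayleigh A E xs + t * (rayleigh A E x - rayleigh A E xs) := by
  obtain ⟨ht0, ht1⟩ := ht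
  obtain ⟨hΔ0, hΔ1⟩ := hΔ
  have ha' : 0 < A.mulVec x' ⬝ᵥ x' := dot_pos A hA hx'
  have he' : 0 < E.mulVec x' ⬝ᵥ x' := dot_pos E hE hx'
  have has : 0 < A.mulVec xs ⬝ᵥ xs := dot_pos A hA hxs
  have hes : 0 < E.mulVec xs ⬝ᵥ xs := dot_pos E hE hxs
  have hlams : rayleigh A E xs = (A.mulVec xs ⬝ᵥ xs) / (E.mulVec xs ⬝ᵥ xs) := rfl
  have hlams_pos : 0 < rayleigh A E xs := by rw [hlams]; positivity
  have hmu_ge : rayleigh A E xs ≤ rayleigh A E xs + t * (rayleigh A E x - rayleigh A E xs) := by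
    have := mul_nonneg ht0.le (sub_nonneg.mpr hls)
    linarith
  have hmu0 : 0 < rayleigh A E xs + t * (rayleigh A E x - rayleigh A E xs) :=
    lt_of_lt_of_le hlams_pos hmu_ge
  -- residual facts
  have hortho : residualA A E xs ⬝ᵥ xs = 0 := by
    rw [residualA, sub_dotProduct, smul_dotProduct, smul_eq_mul, hlams]
    field_simp
    ring
  have hrr_nonneg : 0 ≤ A⁻¹.mulVec (residualA A E xs) ⬝ᵥ residualA A E xs := by
    have h := (hA.inv).posSemidef.dotProduct_mulVec_nonneg (residualA A E xs)
    simp only [star_trivial] at h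
    rwa [dotProduct_comm]
  -- r ⬝ x' identity
  have hrx' : residualA A E xs ⬝ᵥ x'
      = (A.mulVec x' ⬝ᵥ xs) - rayleigh A E xs * (E.mulVec x' ⬝ᵥ xs) := by
    rw [residualA, sub_dotProduct, smul_dotProduct, smul_eq_mul,
      symm_dot A hA.1 xs x', symm_dot E hE.1 xs x']
  -- projection bound
  have hAinvr : A.mulVec (A⁻¹.mulVec (residualA A E xs)) = residualA A E xs := by
    rw [Matrix.mulVec_mulVec, Matrix.mul_nonsing_inv A hA.det_pos.ne'.isUnit,
      Matrix.one_mulVec]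
  have hrx2 : (residualA A E xs ⬝ᵥ x') ^ 2
      ≤ (A⁻¹.mulVec (residualA A E xs) ⬝ᵥ residualA A E xs)
        * ((A.mulVec x' ⬝ᵥ x') - (A.mulVec x' ⬝ᵥ xs) ^ 2 / (A.mulVec xs ⬝ᵥ xs)) := by
    have hAp : A.mulVec (x' - ((A.mulVec x' ⬝ᵥ xs) / (A.mulVec xs ⬝ᵥ xs)) • xs)
        ⬝ᵥ (x' - ((A.mulVec x' ⬝ᵥ xs) / (A.mulVec xs ⬝ᵥ xs)) • xs)
        = (A.mulVec x' ⬝ᵥ x') - (A.mulVec x' ⬝ᵥ xs) ^ 2 / (A.mulVec xs ⬝ᵥ xs) := by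
      rw [Matrix.mulVec_sub, Matrix.mulVec_smul]
      simp only [sub_dotProduct, dotProduct_sub, smul_dotProduct, dotProduct_smul, smul_eq_mul]
      rw [symm_dot A hA.1 xs x']
      field_simp
      ring
    have hrp : residualA A E xs ⬝ᵥ (x' - ((A.mulVec x' ⬝ᵥ xs) / (A.mulVec xs ⬝ᵥ xs)) • xs)
        = residualA A E xs ⬝ᵥ x' := by
      rw [dotProduct_sub, dotProduct_smul, smul_eq_mul, hortho]
      ring
    have h := cs_psd A hA.posSemidef (A⁻¹.mulVec (residualA A E xs))
      (x' - ((A.mulVec x' ⬝ᵥ xs) / (A.mulVec xs ⬝ᵥ xs)) • xs)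
    rw [hAinvr, hAp, hrp] at h
    have h2 : residualA A E xs ⬝ᵥ A⁻¹.mulVec (residualA A E xs)
        = A⁻¹.mulVec (residualA A E xs) ⬝ᵥ residualA A E xs := dotProduct_comm _ _
    rwa [h2] at h
  -- sine as explicit sqrt
  have hsin : Real.sin (angleA A x' xs)
      = Real.sqrt (1 - ((A.mulVec x' ⬝ᵥ xs)
          / (Real.sqrt (A.mulVec x' ⬝ᵥ x') * Real.sqrt (A.mulVec xs ⬝ᵥ xs))) ^ 2) := by
    rw [angleA, Real.sin_arccos]
    rfl
  have hcsA := cs_psd A hA.posSemidef x' xs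
  have hcsE := cs_psd E hE.posSemidef x' xs
  have key := arith_main (A.mulVec x' ⬝ᵥ x') (E.mulVec x' ⬝ᵥ x')
    (A.mulVec xs ⬝ᵥ xs) (E.mulVec xs ⬝ᵥ xs) (A.mulVec x' ⬝ᵥ xs)
    (residualA A E xs ⬝ᵥ x') (E.mulVec x' ⬝ᵥ xs)
    (A⁻¹.mulVec (residualA A E xs) ⬝ᵥ residualA A E xs)
    (rhoRes A E xs) (rayleigh A E xs)
    (rayleigh A E xs + t * (rayleigh A E x - rayleigh A E xs)) Δ
    ((A.mulVec x' ⬝ᵥ xs) / (Real.sqrt (A.mulVec x' ⬝ᵥ x') * Real.sqrt (A.mulVec xs ⬝ᵥ xs)))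
    (Real.sqrt (1 - ((A.mulVec x' ⬝ᵥ xs)
      / (Real.sqrt (A.mulVec x' ⬝ᵥ x') * Real.sqrt (A.mulVec xs ⬝ᵥ xs))) ^ 2))
    ha' he' has hes hlams hmu0 hrr_nonneg rfl hm hcsA hΔ0 hΔ1 rfl rfl
    (hsin ▸ hangle) hcond hrx2 (by rw [hrx']; ring) hcsE
  exact key
lemma rayleigh_neg (A E : Matrix (Fin n) (Fin n) ℝ) (xs : Fin n → ℝ) :
    rayleigh A E (-xs) = rayleigh A E xs := by
  simp [rayleigh, Matrix.mulVec_neg, dotProduct_neg, neg_dotProduct]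

lemma residual_neg (A E : Matrix (Fin n) (Fin n) ℝ) (xs : Fin n → ℝ) :
    residualA A E (-xs) = -(residualA A E xs) := by
  rw [residualA, residualA, rayleigh_neg, Matrix.mulVec_neg, Matrix.mulVec_neg, smul_neg]
  abel

lemma normA_neg (A : Matrix (Fin n) (Fin n) ℝ) (xs : Fin n → ℝ) :
    normA A (-xs) = normA A xs := by
  simp [normA, ipA, Matrix.mulVec_neg, dotProduct_neg, neg_dotProduct]

lemma rhoRes_neg (A E : Matrix (Fin n) (Fin n) ℝ) (xs : Fin n → ℝ) :
    rhoRes A E (-xs) = rhoRes A E xs := by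
  rw [rhoRes, rhoRes, residual_neg, normA_neg, Matrix.mulVec_neg, dotProduct_neg,
    neg_dotProduct, neg_neg]

lemma sin_angle_neg (A : Matrix (Fin n) (Fin n) ℝ) (x' xs : Fin n → ℝ) :
    Real.sin (angleA A x' (-xs)) = Real.sin (angleA A x' xs) := by
  rw [angleA, angleA, normA_neg]
  have h : ipA A x' (-xs) = -(ipA A x' xs) := by simp [ipA, dotProduct_neg]
  rw [h, neg_div, Real.arccos_neg, Real.sin_pi_sub]

/-- Lemma on adaptive truncation of iterates: a bound on the `A`-angle between the
truncated iterate `x'` and `x⋆` controls the increase of the Rayleigh quotient. -/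
theorem rayleigh_bound_under_truncation
    {n : ℕ} (hn : 1 ≤ n)
    (A E : Matrix (Fin n) (Fin n) ℝ) (hA : A.PosDef) (hE : E.PosDef)
    (x xs x' : Fin n → ℝ) (hx : x ≠ 0) (hxs : xs ≠ 0) (hx' : x' ≠ 0)
    (hls : rayleigh A E xs ≤ rayleigh A E x)
    (t : ℝ) (ht : t ∈ Set.Ioo (0:ℝ) 1)
    (Δ : ℝ) (hΔ : Δ ∈ Set.Ioo (0:ℝ) 1)
    (hcond : Real.sqrt (1 - Δ ^ 2) - rhoRes A E xs * Δ ≥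
      Real.sqrt (rayleigh A E xs /
        (rayleigh A E xs + t * (rayleigh A E x - rayleigh A E xs))))
    (hangle : Real.sin (angleA A x' xs) ≤ Δ) :
    rayleigh A E x' ≤ rayleigh A E xs + t * (rayleigh A E x - rayleigh A E xs) := by
  by_cases hm : 0 ≤ A.mulVec x' ⬝ᵥ xs
  · exact key_lemma A E hA hE x xs x' hxs hx' hls t ht Δ hΔ hcond hangle hm
  · have hm' : 0 ≤ A.mulVec x' ⬝ᵥ (-xs) := by
      rw [dotProduct_neg]
      linarith [not_le.mp hm]
    have h := key_lemma A E hA hE x (-xs) x' (neg_ne_zero.mpr hxs) hx'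
      (by rwa [rayleigh_neg]) t ht Δ hΔ
      (by rwa [rayleigh_neg, rhoRes_neg]) (by rwa [sin_angle_neg]) hm'
    rwa [rayleigh_neg] at h
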